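/- arXiv:0711.1953 — 2 statements merged into one kernel-verified Lean document; each statement's English description precedes it below -/
import Mathlib

section
/- Let μ be a finite Borel measure on ℝ with compact support. Then the global modulus of continuity s(μ,·) is right-continuous: for every ε ≥ 0 one has s(μ, ε) = lim_{δ → 0+} s(μ, ε + δ). -/
open MeasureTheory Filter

/-- The global modulus of continuity of a measure `μ` on `ℝ`:
`s(μ, ε) = sup_{λ ∈ ℝ} μ([λ - ε, λ + ε])`. -/
noncomputable def modCont (μ : Measure ℝ) (ε : ℝ) : ℝ :=
  ⨆ l : ℝ, (μ (Set.Icc (l - ε) (l + ε))).toReal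

/-- ENNReal-valued version of `modCont`. -/
noncomputable def modContE (μ : Measure ℝ) (ε : ℝ) : ENNReal :=
  ⨆ l : ℝ, μ (Set.Icc (l - ε) (l + ε))

lemma modContE_mono (μ : Measure ℝ) : Monotone (modContE μ) := by
  intro a b hab
  exact iSup_mono fun l => measure_mono (Set.Icc_subset_Icc (by linarith) (by linarith))

lemma modContE_ne_top (μ : Measure ℝ) [IsFiniteMeasure μ] (ε : ℝ) : modContE μ ε ≠ ⊤ :=
  ne_top_of_le_ne_top (measure_ne_top μ Set.univ)
    (iSup_le fun _ => measure_mono (Set.subset_univ _))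

lemma modCont_eq_toReal (μ : Measure ℝ) [IsFiniteMeasure μ] (ε : ℝ) :
    modCont μ ε = (modContE μ ε).toReal := by
  rw [modContE, ENNReal.toReal_iSup fun l => measure_ne_top μ _]
  rfl

lemma key_le (μ : Measure ℝ) [IsFiniteMeasure μ]
    (hsupp : ∃ K : Set ℝ, IsCompact K ∧ μ Kᶜ = 0) (ε : ℝ) :
    ⨅ δ ∈ Set.Ioi (0 : ℝ), modContE μ (ε + δ) ≤ modContE μ ε := by
  obtain ⟨K, hK, hμK⟩ := hsupp
  obtain ⟨R, hR⟩ := hK.isBounded.subset_closedBall 0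
  rw [Real.closedBall_eq_Icc, zero_sub, zero_add] at hR
  set L : ENNReal := ⨅ δ ∈ Set.Ioi (0 : ℝ), modContE μ (ε + δ) with hLdef
  rcases eq_or_ne L 0 with hL0 | hL0
  · simp [hL0]
  have hLle : ∀ δ : ℝ, 0 < δ → L ≤ modContE μ (ε + δ) := fun δ hδ => biInf_le _ hδ
  have hLtop : L ≠ ⊤ :=
    ne_top_of_le_ne_top (modContE_ne_top μ (ε + 1)) (hLle 1 one_pos)
  -- choose near-maximizers
  set c : ℕ → ENNReal := fun n => ENNReal.ofReal (1 / (n + 1)) with hcdef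
  have hcpos : ∀ n : ℕ, c n ≠ 0 := by
    intro n
    simp only [hcdef, ne_eq, ENNReal.ofReal_eq_zero, not_le]
    positivity
  have hδpos : ∀ n : ℕ, (0 : ℝ) < 1 / (n + 1) := by intro n; positivity
  have H : ∀ n : ℕ, ∃ l : ℝ,
      L - c n < μ (Set.Icc (l - (ε + 1 / (n + 1))) (l + (ε + 1 / (n + 1)))) := by
    intro n
    have h1 : L - c n < L := ENNReal.sub_lt_self hLtop hL0 (hcpos n)
    have h2 : L - c n < modContE μ (ε + 1 / (n + 1)) := h1.trans_le (hLle _ (hδpos n))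
    rwa [modContE, lt_iSup_iff] at h2
  choose l hl using H
  -- the near-maximizers stay in a compact interval
  have hlmem : ∀ n : ℕ, l n ∈ Set.Icc (-(R + ε + 1)) (R + ε + 1) := by
    intro n
    by_contra hmem
    have hzero : μ (Set.Icc (l n - (ε + 1 / (n + 1))) (l n + (ε + 1 / (n + 1)))) = 0 := by
      refine measure_mono_null ?_ hμK
      intro x hx
      intro hxK
      have hxR := hR hxK
      simp only [Set.mem_Icc] at hx hxR
      simp only [Set.mem_Icc, not_and_or, not_le] at hmem
      have hd : 1 / ((n : ℝ) + 1) ≤ 1 := by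
        rw [div_le_one (by positivity)]; linarith [Nat.cast_nonneg (α := ℝ) n]
      rcases hmem with hmem | hmem
      · linarith [hx.2, hxR.1]
      · linarith [hx.1, hxR.2]
    have := hl n
    rw [hzero] at this
    exact this.not_ge zero_le
  obtain ⟨l₀, -, φ, hφ, hφt⟩ := (isCompact_Icc).tendsto_subseq hlmem
  -- for every η > 0, the enlarged interval has measure at least L
  have hbig : ∀ η : ℝ, 0 < η → L ≤ μ (Set.Icc (l₀ - ε - η) (l₀ + ε + η)) := by
    intro η hη
    refine ENNReal.le_of_forall_pos_le_add fun r hr _ => ?_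
    rw [Metric.tendsto_atTop] at hφt
    obtain ⟨N₁, hN₁⟩ := hφt (η / 2) (by positivity)
    obtain ⟨N₂, hN₂⟩ := exists_nat_one_div_lt (show (0:ℝ) < min (η / 2) r by positivity)
    set n := max N₁ N₂ with hn
    have h1 : dist (l (φ n)) l₀ < η / 2 := hN₁ n (le_max_left _ _)
    have hφn : (N₂ : ℝ) + 1 ≤ (φ n : ℝ) + 1 := by
      have : N₂ ≤ φ n := le_trans (le_max_right _ _) (hφ.le_apply)
      exact_mod_cast Nat.succ_le_succ this
    have h2 : 1 / ((φ n : ℝ) + 1) < min (η / 2) r := by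
      calc 1 / ((φ n : ℝ) + 1) ≤ 1 / ((N₂ : ℝ) + 1) := by
            apply one_div_le_one_div_of_le (by positivity) hφn
        _ < min (η / 2) r := hN₂
    have hsub : Set.Icc (l (φ n) - (ε + 1 / (φ n + 1))) (l (φ n) + (ε + 1 / (φ n + 1)))
        ⊆ Set.Icc (l₀ - ε - η) (l₀ + ε + η) := by
      have hd := abs_lt.mp (by rwa [Real.dist_eq] at h1)
      have h2' := lt_of_lt_of_le h2 (min_le_left _ _)
      exact Set.Icc_subset_Icc (by linarith [hd.1, hd.2]) (by linarith [hd.1, hd.2])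
    have := (hl (φ n)).le.trans (measure_mono hsub)
    have hLb : L ≤ μ (Set.Icc (l₀ - ε - η) (l₀ + ε + η)) + c (φ n) :=
      tsub_le_iff_right.mp this
    have hcr : c (φ n) ≤ (r : ENNReal) := by
      rw [hcdef]
      calc ENNReal.ofReal (1 / (φ n + 1)) ≤ ENNReal.ofReal r :=
            ENNReal.ofReal_le_ofReal (le_of_lt (h2.trans_le (min_le_right _ _)))
        _ = (r : ENNReal) := ENNReal.ofReal_coe_nnreal
    exact hLb.trans (add_le_add le_rfl hcr)
  -- pass to the limit η → 0 by continuity from above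
  set A : ℕ → Set ℝ := fun n => Set.Icc (l₀ - ε - 1 / (n + 1)) (l₀ + ε + 1 / (n + 1)) with hA
  have hAanti : Antitone A := by
    intro m k hmk
    have : 1 / ((k : ℝ) + 1) ≤ 1 / ((m : ℝ) + 1) := by
      apply one_div_le_one_div_of_le (by positivity)
      have := Nat.succ_le_succ hmk
      exact_mod_cast this
    exact Set.Icc_subset_Icc (by linarith) (by linarith)
  have hAint : (⋂ n, A n) = Set.Icc (l₀ - ε) (l₀ + ε) := by
    ext x
    simp only [Set.mem_iInter, hA, Set.mem_Icc]
    constructor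
    · intro h
      constructor
      · by_contra hc
        push_neg at hc
        obtain ⟨n, hn⟩ := exists_nat_one_div_lt (show (0:ℝ) < l₀ - ε - x by linarith)
        linarith [(h n).1]
      · by_contra hc
        push_neg at hc
        obtain ⟨n, hn⟩ := exists_nat_one_div_lt (show (0:ℝ) < x - (l₀ + ε) by linarith)
        linarith [(h n).2]
    · intro h n
      have := hδpos n
      constructor <;> [linarith [h.1]; linarith [h.2]]
  have htend : Tendsto (μ ∘ A) atTop (nhds (μ (⋂ n, A n))) :=
    tendsto_measure_iInter_atTop (fun n => (measurableSet_Icc).nullMeasurableSet)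
      hAanti ⟨0, measure_ne_top μ _⟩
  have hLle' : L ≤ μ (⋂ n, A n) :=
    ge_of_tendsto' htend fun n => hbig _ (hδpos n)
  rw [hAint] at hLle'
  exact hLle'.trans (le_iSup (fun l : ℝ => μ (Set.Icc (l - ε) (l + ε))) l₀)

theorem modCont_right_continuous (μ : Measure ℝ) [IsFiniteMeasure μ]
    (hsupp : ∃ K : Set ℝ, IsCompact K ∧ μ Kᶜ = 0)
    (ε : ℝ) (hε : 0 ≤ ε) :
    Tendsto (fun δ : ℝ => modCont μ (ε + δ)) (nhdsWithin 0 (Set.Ioi 0))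
      (nhds (modCont μ ε)) := by
  have hE : Tendsto (fun δ : ℝ => modContE μ (ε + δ)) (nhdsWithin 0 (Set.Ioi 0))
      (nhds (modContE μ ε)) := by
    rw [tendsto_order]
    constructor
    · intro a ha
      filter_upwards [self_mem_nhdsWithin] with δ hδ
      exact ha.trans_le (modContE_mono μ (by simp only [Set.mem_Ioi] at hδ; linarith))
    · intro b hb
      have : (⨅ δ ∈ Set.Ioi (0 : ℝ), modContE μ (ε + δ)) < b :=
        (key_le μ hsupp ε).trans_lt hb
      rw [iInf_lt_iff] at this
      obtain ⟨δ₀, hδ₀⟩ := this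
      rw [iInf_lt_iff] at hδ₀
      obtain ⟨hδ₀pos, hδ₀lt⟩ := hδ₀
      filter_upwards [Ioo_mem_nhdsGT_of_mem (Set.mem_Ico.mpr ⟨le_refl (0:ℝ), hδ₀pos⟩)]
        with δ hδ
      exact (modContE_mono μ (by linarith [hδ.2])).trans_lt hδ₀lt
  have := (ENNReal.tendsto_toReal (modContE_ne_top μ ε)).comp hE
  rw [← modCont_eq_toReal] at this
  convert this using 1
  funext δ
  simp [Function.comp, modCont_eq_toReal]
end

section
/- Let μ be a finite Borel measure on ℝ whose support is contained in the interval [a, b], let φ : ℝ → ℝ be a bounded, nondecreasing, continuously differentiable function, and let δ > 0. Then ∫ (φ(x + 2δ) − φ(x)) dμ(x) ≤ s(μ, δ) · (φ(b + 2δ) − φ(a)). -/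
open MeasureTheory Filter

lemma deriv_nonneg_of_monotone' {φ : ℝ → ℝ} (h : Monotone φ) (x : ℝ) : 0 ≤ deriv φ x := by
  by_cases hd : DifferentiableAt ℝ φ x
  · have h1 : Tendsto (slope φ x) (nhdsWithin x (Set.Ioi x)) (nhds (deriv φ x)) :=
      (hasDerivAt_iff_tendsto_slope.mp hd.hasDerivAt).mono_left
        (nhdsWithin_mono x fun y hy => (Set.mem_compl_singleton_iff.mpr (ne_of_gt hy)))
    refine ge_of_tendsto h1 (eventually_nhdsWithin_of_forall fun y hy => ?_)
    simp only [slope_def_field]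
    exact div_nonneg (sub_nonneg.2 (h (le_of_lt hy))) (sub_nonneg.2 (le_of_lt hy))
  · rw [deriv_zero_of_not_differentiableAt hd]

theorem averaging_inequality (μ : Measure ℝ) [IsFiniteMeasure μ]
    (a b : ℝ) (hsupp : μ (Set.Icc a b)ᶜ = 0)
    (φ : ℝ → ℝ) (hφ_bdd : ∃ M : ℝ, ∀ x, |φ x| ≤ M) (hφ_mono : Monotone φ)
    (hφ_smooth : ContDiff ℝ 1 φ)
    (δ : ℝ) (hδ : 0 < δ) :
    ∫ x, (φ (x + 2 * δ) - φ x) ∂μ ≤ modCont μ δ * (φ (b + 2 * δ) - φ a) := by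
  classical
  rcases lt_or_ge b a with hba | hab
  · -- degenerate case: μ = 0
    have hμ0 : μ = 0 := by
      have h1 : Set.Icc a b = ∅ := Set.Icc_eq_empty (not_le.mpr hba)
      have : μ Set.univ = 0 := by
        rw [← Set.compl_empty, ← h1]; exact hsupp
      exact Measure.measure_univ_eq_zero.mp this
    subst hμ0
    simp [modCont]
  -- main case : a ≤ b
  set g := deriv φ with hgdef
  have hgc : Continuous g := hφ_smooth.continuous_deriv le_rfl
  have hdiff : Differentiable ℝ φ := hφ_smooth.differentiable one_ne_zero
  have hg0 : ∀ t, 0 ≤ g t := fun t => deriv_nonneg_of_monotone' hφ_mono t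
  have hFTC : ∀ u v : ℝ, u ≤ v →
      ∫⁻ t in Set.Ioc u v, ENNReal.ofReal (g t) = ENNReal.ofReal (φ v - φ u) := by
    intro u v huv
    have h1 : ∫ t in Set.Ioc u v, g t = φ v - φ u := by
      rw [← intervalIntegral.integral_of_le huv]
      exact intervalIntegral.integral_deriv_eq_sub (fun x _ => hdiff x)
        (hgc.intervalIntegrable u v)
    rw [← h1, ← ofReal_integral_eq_lintegral_ofReal hgc.integrableOn_Ioc
      (ae_of_all _ fun t => hg0 t)]
  have hs0 : 0 ≤ modCont μ δ := Real.iSup_nonneg fun l => ENNReal.toReal_nonneg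
  have hμ_le : ∀ l : ℝ, μ (Set.Icc (l - δ) (l + δ)) ≤ ENNReal.ofReal (modCont μ δ) := by
    intro l
    have hbdd : BddAbove (Set.range fun l : ℝ => (μ (Set.Icc (l - δ) (l + δ))).toReal) := by
      refine ⟨(μ Set.univ).toReal, ?_⟩
      rintro _ ⟨l, rfl⟩
      exact ENNReal.toReal_mono (measure_ne_top μ _) (measure_mono (Set.subset_univ _))
    have h1 : (μ (Set.Icc (l - δ) (l + δ))).toReal ≤ modCont μ δ := le_ciSup hbdd l
    calc μ (Set.Icc (l - δ) (l + δ))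
        = ENNReal.ofReal (μ (Set.Icc (l - δ) (l + δ))).toReal :=
          (ENNReal.ofReal_toReal (measure_ne_top μ _)).symm
      _ ≤ ENNReal.ofReal (modCont μ δ) := ENNReal.ofReal_le_ofReal h1
  set F : ℝ → ℝ → ENNReal := fun x t =>
    (Set.Ioc x (x + 2 * δ)).indicator (fun t => ENNReal.ofReal (g t)) t with hF
  have hFmeas : AEMeasurable (Function.uncurry F) (μ.prod volume) := by
    have hS : MeasurableSet {p : ℝ × ℝ | p.1 < p.2 ∧ p.2 ≤ p.1 + 2 * δ} :=
      (measurableSet_lt measurable_fst measurable_snd).inter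
        (measurableSet_le measurable_snd (measurable_fst.add_const _))
    have heq : Function.uncurry F =
        Set.indicator {p : ℝ × ℝ | p.1 < p.2 ∧ p.2 ≤ p.1 + 2 * δ}
          (fun p => ENNReal.ofReal (g p.2)) := by
      funext p
      simp only [Function.uncurry, hF, Set.indicator_apply, Set.mem_Ioc, Set.mem_setOf_eq]
    rw [heq]
    exact (Measurable.indicator ((hgc.measurable.comp measurable_snd).ennreal_ofReal) hS).aemeasurable
  have key : ∫⁻ x, ENNReal.ofReal (φ (x + 2 * δ) - φ x) ∂μ ≤
      ENNReal.ofReal (modCont μ δ * (φ (b + 2 * δ) - φ a)) := by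
    have h1 : ∀ x : ℝ, ENNReal.ofReal (φ (x + 2 * δ) - φ x) = ∫⁻ t, F x t := by
      intro x
      rw [hF]
      rw [lintegral_indicator measurableSet_Ioc]
      exact (hFTC x (x + 2 * δ) (by linarith)).symm
    calc ∫⁻ x, ENNReal.ofReal (φ (x + 2 * δ) - φ x) ∂μ
        = ∫⁻ x, ∫⁻ t, F x t ∂volume ∂μ := by simp_rw [h1]
      _ = ∫⁻ t, ∫⁻ x, F x t ∂μ ∂volume := lintegral_lintegral_swap hFmeas
      _ = ∫⁻ t, ENNReal.ofReal (g t) * μ (Set.Ico (t - 2 * δ) t) ∂volume := by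
          refine lintegral_congr fun t => ?_
          have heq : (fun x => F x t) =
              (Set.Ico (t - 2 * δ) t).indicator (fun _ => ENNReal.ofReal (g t)) := by
            funext x
            simp only [hF, Set.indicator_apply, Set.mem_Ioc, Set.mem_Ico]
            congr 1
            simp only [eq_iff_iff]
            constructor <;> (intro h; constructor <;> linarith [h.1, h.2])
          rw [heq, lintegral_indicator measurableSet_Ico, setLIntegral_const]
      _ ≤ ∫⁻ t, (Set.Ioc a (b + 2 * δ)).indicator
            (fun t => ENNReal.ofReal (g t) * ENNReal.ofReal (modCont μ δ)) t ∂volume := by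
          refine lintegral_mono fun t => ?_
          by_cases ht : t ∈ Set.Ioc a (b + 2 * δ)
          · rw [Set.indicator_of_mem ht]
            refine mul_le_mul_right ?_ _
            have h2 : Set.Ico (t - 2 * δ) t ⊆ Set.Icc ((t - δ) - δ) ((t - δ) + δ) := by
              intro x hx
              simp only [Set.mem_Ico] at hx
              constructor <;> [linarith [hx.1]; linarith [hx.2]]
            exact (measure_mono h2).trans (hμ_le (t - δ))
          · rw [Set.indicator_of_notMem ht]
            have h2 : μ (Set.Ico (t - 2 * δ) t) = 0 := by
              refine measure_mono_null ?_ hsupp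
              intro x hx
              simp only [Set.mem_Ico] at hx
              simp only [Set.mem_compl_iff, Set.mem_Icc, not_and_or, not_le]
              simp only [Set.mem_Ioc, not_and_or, not_lt, not_le] at ht
              rcases ht with ht | ht
              · left; linarith [hx.2]
              · right; linarith [hx.1]
            rw [h2, mul_zero]
      _ = ENNReal.ofReal (modCont μ δ) * ∫⁻ t in Set.Ioc a (b + 2 * δ),
            ENNReal.ofReal (g t) ∂volume := by
          rw [lintegral_indicator measurableSet_Ioc]
          simp_rw [mul_comm (ENNReal.ofReal (g _))]
          rw [lintegral_const_mul _ (hgc.measurable.ennreal_ofReal)]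
      _ = ENNReal.ofReal (modCont μ δ) * ENNReal.ofReal (φ (b + 2 * δ) - φ a) := by
          rw [hFTC a (b + 2 * δ) (by linarith)]
      _ = ENNReal.ofReal (modCont μ δ * (φ (b + 2 * δ) - φ a)) :=
          (ENNReal.ofReal_mul hs0).symm
  -- convert back to real integrals
  obtain ⟨M, hM⟩ := hφ_bdd
  have hcont : Continuous fun x => φ (x + 2 * δ) - φ x :=
    (hdiff.continuous.comp (continuous_id.add continuous_const)).sub hdiff.continuous
  have hint : Integrable (fun x => φ (x + 2 * δ) - φ x) μ := by
    refine Integrable.mono' (integrable_const (2 * M)) hcont.aestronglyMeasurable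
      (ae_of_all _ fun x => ?_)
    have := hM (x + 2 * δ); have := hM x
    rw [Real.norm_eq_abs]
    calc |φ (x + 2 * δ) - φ x| ≤ |φ (x + 2 * δ)| + |φ x| := abs_sub _ _
      _ ≤ 2 * M := by linarith
  have hnn : 0 ≤ᵐ[μ] fun x => φ (x + 2 * δ) - φ x :=
    ae_of_all _ fun x => sub_nonneg.2 (hφ_mono (by linarith))
  have heq := ofReal_integral_eq_lintegral_ofReal hint hnn
  have hfin : ENNReal.ofReal (∫ x, (φ (x + 2 * δ) - φ x) ∂μ) ≤
      ENNReal.ofReal (modCont μ δ * (φ (b + 2 * δ) - φ a)) := heq ▸ key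
  have hRHS0 : 0 ≤ modCont μ δ * (φ (b + 2 * δ) - φ a) :=
    mul_nonneg hs0 (sub_nonneg.2 (hφ_mono (by linarith)))
  exact (ENNReal.ofReal_le_ofReal_iff hRHS0).mp hfin
end
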